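/- Markov's rule fails in the Beth model over the binary tree: define the atomic family φ(x) to be valuated true at a node α (a finite binary sequence) iff some entry α_k with k < x equals 1. Then the root forces ∀x(φ(x) ∨ ¬φ(x)) and forces ¬¬∃x φ(x), but the root does not force ∃x φ(x). -/

import Mathlib

/-- Evaluated formulas of a logical-mathematical language: atoms from `A`,
falsity, conjunction, disjunction, implication, and quantifiers over a
domain `D` (an "evaluated" quantified formula is a `D`-indexed family). -/
inductive Fml (A D : Type) where
  | atom : A → Fml A D
  | bot  : Fml A D
  | and  : Fml A D → Fml A D → Fml A D
  | or   : Fml A D → Fml A D → Fml A D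
  | imp  : Fml A D → Fml A D → Fml A D
  | all  : (D → Fml A D) → Fml A D
  | ex   : (D → Fml A D) → Fml A D

/-- Beth forcing over a poset given by relation `le`, with atomic valuation `Val`.
Paths are maximal chains. -/
def Forces {M A D : Type} (le : M → M → Prop) (Val : M → A → Prop) :
    M → Fml A D → Prop
  | α, .atom a => ∀ S : Set M, IsMaxChain le S → α ∈ S → ∃ β ∈ S, Val β a
  | _, .bot => False
  | α, .and φ ψ => Forces le Val α φ ∧ Forces le Val α ψ
  | α, .or φ ψ => ∀ S : Set M, IsMaxChain le S → α ∈ S →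
      ∃ β ∈ S, (Forces le Val β φ ∨ Forces le Val β ψ)
  | α, .imp φ ψ => ∀ β, le β α → Forces le Val β φ → Forces le Val β ψ
  | α, .all φ => ∀ c, Forces le Val α (φ c)
  | α, .ex φ => ∀ S : Set M, IsMaxChain le S → α ∈ S →
      ∃ β ∈ S, ∃ c, Forces le Val β (φ c)

/-- Valuation over the binary tree: `φ(x)` is true at a finite binary
sequence α iff some entry `α_k` with `k < x` equals 1 (= `true`). -/
def markovVal (α : List Bool) (x : ℕ) : Prop :=
  ∃ k < x, α[k]? = some true

/-! ### Auxiliary machinery -/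

/-- The initial segment of length `n` of the infinite path `f`. -/
def branch (f : ℕ → Bool) (n : ℕ) : List Bool := List.ofFn fun i : Fin n => f i

lemma branch_mono (f : ℕ → Bool) {m n : ℕ} (h : m ≤ n) : branch f m <+: branch f n := by
  induction n with
  | zero => simp_all [branch]
  | succ n ih =>
    rcases Nat.lt_or_ge m (n+1) with h' | h'
    · refine (ih (by omega)).trans ?_
      conv_rhs => rw [branch, List.ofFn_succ']
      exact ⟨[f n], by simp [branch, List.concat_eq_append]⟩
    · have : m = n+1 := by omega
      subst this; exact List.prefix_refl _

lemma branch_get? (f : ℕ → Bool) (n k : ℕ) (h : k < n) :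
    (branch f n)[k]? = some (f k) := by
  simp [branch, h]

lemma length_branch (f : ℕ → Bool) (n : ℕ) : (branch f n).length = n := by simp [branch]

lemma branch_maxChain (f : ℕ → Bool) :
    IsMaxChain (fun y x : List Bool => x <+: y) (Set.range (branch f)) := by
  constructor
  · rintro _ ⟨m, rfl⟩ _ ⟨n, rfl⟩ _
    rcases Nat.le_total m n with h | h
    · exact Or.inr (branch_mono f h)
    · exact Or.inl (branch_mono f h)
  · intro S hS hsub
    refine Set.Subset.antisymm hsub (fun t ht => ?_)
    have hb : branch f t.length ∈ S := hsub ⟨t.length, rfl⟩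
    by_cases he : t = branch f t.length
    · exact he ▸ ⟨t.length, rfl⟩
    · rcases hS ht hb he with h | h
      · exact ⟨t.length, (h.eq_of_length ((length_branch f _).trans rfl)).symm ▸ rfl⟩
      · exact ⟨t.length, (h.eq_of_length (by simp [length_branch])).symm⟩

lemma nil_mem_branch (f : ℕ → Bool) : [] ∈ Set.range (branch f) :=
  ⟨0, by simp [branch]⟩

/-- A list belongs to the path padding it with `false`s. -/
lemma mem_branch_pad (γ : List Bool) :
    γ ∈ Set.range (branch fun i => γ.getD i false) := by
  refine ⟨γ.length, ?_⟩
  apply List.ext_getElem?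
  intro k
  rcases Nat.lt_or_ge k γ.length with h | h
  · rw [branch_get? _ _ _ h, List.getD_eq_getElem _ _ h]
    simp [h]
  · rw [List.getElem?_eq_none,
      List.getElem?_eq_none] <;> simp [length_branch, h]

lemma pad_true {γ : List Bool} {k : ℕ} (h : γ.getD k false = true) :
    γ[k]? = some true := by
  rcases Nat.lt_or_ge k γ.length with hk | hk
  · rw [List.getD_eq_getElem _ _ hk] at h
    simp [hk, h]
  · rw [List.getD_eq_default _ _ hk] at h; simp at h

lemma prefix_get? {β γ : List Bool} (h : β <+: γ) {k : ℕ} (hk : k < β.length) :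
    γ[k]? = β[k]? := by
  have := h.getElem hk
  have hk' : k < γ.length := lt_of_lt_of_le hk h.length_le
  simp [hk, hk', this]

lemma prefix_snoc {β s : List Bool} {b : Bool} (h : β <+: s)
    (hb : s[β.length]? = some b) : β ++ [b] <+: s := by
  obtain ⟨t, rfl⟩ := h
  rw [List.getElem?_append_right le_rfl] at hb
  simp only [Nat.sub_self] at hb
  cases t with
  | nil => simp at hb
  | cons a t' =>
    simp only [List.getElem?_cons_zero, Option.some.injEq] at hb
    subst hb
    exact ⟨t', by simp⟩

/-- In a maximal chain, anything comparable with every element is a member. -/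
lemma mem_of_compat {S : Set (List Bool)} (hS : IsMaxChain (fun y x : List Bool => x <+: y) S)
    {t : List Bool} (h : ∀ s ∈ S, t ≠ s → s <+: t ∨ t <+: s) : t ∈ S := by
  have hc : IsChain (fun y x : List Bool => x <+: y) (insert t S) :=
    hS.1.insert (fun b hb hne => h b hb hne)
  have := hS.2 hc (Set.subset_insert _ _)
  rw [this]; exact Set.mem_insert _ _

/-- A maximal chain containing the root contains nodes of every length. -/
lemma exists_len {S : Set (List Bool)} (hS : IsMaxChain (fun y x : List Bool => x <+: y) S)
    (hnil : [] ∈ S) (n : ℕ) : ∃ β ∈ S, β.length = n := by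
  induction n with
  | zero => exact ⟨[], hnil, rfl⟩
  | succ n ih =>
    obtain ⟨β, hβ, hlen⟩ := ih
    -- find s ∈ S strictly extending β whenever β ++ [b] ∉ S
    have key : ∀ b : Bool, (β ++ [b]) ∉ S →
        ∃ s ∈ S, s[n]? = some (!b) := by
      intro b hb
      have : ¬ ∀ s ∈ S, (β ++ [b]) ≠ s → s <+: (β ++ [b]) ∨ (β ++ [b]) <+: s := by
        intro h; exact hb (mem_of_compat hS h)
      push_neg at this
      obtain ⟨s, hs, hne, h1, h2⟩ := this
      -- s is comparable with β
      have hβs : β <+: s := by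
        by_cases he : β = s
        · exact he ▸ List.prefix_refl _
        · rcases hS.1 hβ hs he with h | h
          · exact absurd (h.trans ⟨[b], rfl⟩) h1
          · exact h
      -- s strictly extends β, so it has an entry at position n
      have hlt : n < s.length := by
        rcases lt_or_ge n s.length with h | h
        · exact h
        · exfalso
          have : β = s := hβs.eq_of_length (le_antisymm hβs.length_le (by omega))
          exact h1 (this ▸ ⟨[b], rfl⟩)
      obtain ⟨c, hc⟩ : ∃ c, s[n]? = some c := by
        simp [List.getElem?_eq_getElem hlt]
      refine ⟨s, hs, ?_⟩
      by_cases hcb : c = b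
      · subst hcb
        exact absurd (prefix_snoc hβs (by rw [hlen]; exact hc)) h2
      · have hcb' : c = !b := by cases c <;> cases b <;> simp_all
        rw [hcb'] at hc; exact hc
    by_cases h0 : (β ++ [false]) ∈ S
    · exact ⟨β ++ [false], h0, by simp [hlen]⟩
    by_cases h1 : (β ++ [true]) ∈ S
    · exact ⟨β ++ [true], h1, by simp [hlen]⟩
    obtain ⟨s0, hs0, he0⟩ := key false h0
    obtain ⟨s1, hs1, he1⟩ := key true h1
    exfalso
    have hne : s0 ≠ s1 := by intro h; rw [h, he1] at he0; simp at he0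
    have hn0 : n < s0.length := by
      by_contra h
      rw [List.getElem?_eq_none (by omega)] at he0; simp at he0
    have hn1 : n < s1.length := by
      by_contra h
      rw [List.getElem?_eq_none (by omega)] at he1; simp at he1
    rcases hS.1 hs0 hs1 hne with h | h
    · rw [prefix_get? h hn1] at he0; rw [he1] at he0; simp at he0
    · rw [prefix_get? h hn0] at he1; rw [he0] at he1; simp at he1

/-- Markov's rule fails in the Beth model over the binary tree:
the root forces ∀x(φ(x) ∨ ¬φ(x)) and ¬¬∃x φ(x), but not ∃x φ(x). -/
theorem markov_rule_fails :
    Forces (fun y x : List Bool => x <+: y) markovVal []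
      ((Fml.all fun x : ℕ =>
        Fml.or (Fml.atom x) (Fml.imp (Fml.atom x) Fml.bot)) : Fml ℕ ℕ) ∧
    Forces (fun y x : List Bool => x <+: y) markovVal []
      ((Fml.imp (Fml.imp (Fml.ex fun x : ℕ => Fml.atom x) Fml.bot)
        Fml.bot) : Fml ℕ ℕ) ∧
    ¬ Forces (fun y x : List Bool => x <+: y) markovVal []
      ((Fml.ex fun x : ℕ => Fml.atom x) : Fml ℕ ℕ) := by
  refine ⟨?_, ?_, ?_⟩
  · -- ∀x (φ(x) ∨ ¬φ(x))
    intro c S hS hnil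
    obtain ⟨β, hβ, hlen⟩ := exists_len hS hnil c
    by_cases hm : markovVal β c
    · exact ⟨β, hβ, Or.inl (fun S' _ hβ' => ⟨β, hβ', hm⟩)⟩
    · refine ⟨β, hβ, Or.inr (fun γ hle hγ => ?_)⟩
      obtain ⟨δ, hδ, k, hk, hget⟩ :=
        hγ (Set.range (branch fun i => γ.getD i false))
          (branch_maxChain _) (mem_branch_pad γ)
      obtain ⟨m, rfl⟩ := hδ
      apply hm
      have hkm : k < m := by
        by_contra h
        rw [List.getElem?_eq_none (by simp [length_branch]; omega)]
          at hget
        simp at hget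
      rw [branch_get? _ _ _ hkm] at hget
      have hγk : γ[k]? = some true := pad_true (by simpa using hget)
      refine ⟨k, hk, ?_⟩
      rw [prefix_get? hle (by omega)] at hγk
      exact hγk
  · -- ¬¬∃x φ(x)
    intro β _ h
    apply h (β ++ [true]) ⟨[true], rfl⟩
    intro S _ hmem
    refine ⟨β ++ [true], hmem, β.length + 1, fun S' _ hmem' => ?_⟩
    refine ⟨β ++ [true], hmem', β.length, by omega, ?_⟩
    rw [List.getElem?_append_right le_rfl]
    simp
  · -- but not ∃x φ(x)
    intro h
    obtain ⟨β, hβ, c, hc⟩ :=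
      h (Set.range (branch fun _ => false)) (branch_maxChain _) (nil_mem_branch _)
    obtain ⟨δ, hδ, k, hk, hget⟩ :=
      hc (Set.range (branch fun _ => false)) (branch_maxChain _) hβ
    obtain ⟨m, rfl⟩ := hδ
    rcases Nat.lt_or_ge k m with hkm | hkm
    · rw [branch_get? _ _ _ hkm] at hget; simp at hget
    · rw [List.getElem?_eq_none (by simp [length_branch]; omega)]
        at hget
      simp at hget
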